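/- Let ρ be a positive semidefinite n×n complex matrix and M a Hermitian matrix. Then the following are equivalent: (i) xᴴ·M·y = 0 for all vectors x, y in the kernel of ρ (i.e., with ρ·x = 0 and ρ·y = 0); (ii) there exists an n×n complex matrix Δ such that M = Δ·ρ + ρ·Δᴴ. -/

import Mathlib

open Matrix
open scoped ComplexOrder

/-- For a positive semidefinite `ρ` and Hermitian `M`, the following are
equivalent: (i) `xᴴ M y = 0` for all `x, y` in the kernel of `ρ`; (ii) `M = Δρ + ρΔᴴ` for
some matrix `Δ`. -/
theorem kernel_orthogonal_iff_tangent_form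
    {n : Type*} [Fintype n] [DecidableEq n] [Nonempty n]
    (ρ M : Matrix n n ℂ) (hρ : ρ.PosSemidef) (hM : M.IsHermitian) :
    (∀ x y : n → ℂ, ρ.mulVec x = 0 → ρ.mulVec y = 0 → star x ⬝ᵥ M.mulVec y = 0)
      ↔ ∃ Δ : Matrix n n ℂ, M = Δ * ρ + ρ * Δᴴ := by
  constructor
  · intro h
    have hH := hρ.1
    set U : Matrix n n ℂ := (hH.eigenvectorUnitary : Matrix n n ℂ) with hUdef
    set d : n → ℝ := hH.eigenvalues with hddef
    set D : Matrix n n ℂ := diagonal (RCLike.ofReal ∘ d) with hDdef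
    have hspec : ρ = U * D * star U := hH.spectral_theorem
    have hUU : star U * U = 1 := Unitary.coe_star_mul_self hH.eigenvectorUnitary
    have hUU' : U * star U = 1 := Unitary.coe_mul_star_self hH.eigenvectorUnitary
    set N : Matrix n n ℂ := star U * M * U with hNdef
    have hNherm : Nᴴ = N := by
      rw [hNdef]
      simp [conjTranspose_mul, hM.eq, Matrix.mul_assoc, star_eq_conjTranspose,
        conjTranspose_conjTranspose]
    -- kernel condition gives vanishing entries
    have hNzero : ∀ i j, d i = 0 → d j = 0 → N i j = 0 := by
      intro i j hi hj
      have hcol : ∀ i0 : n, (⇑(hH.eigenvectorBasis i0) : n → ℂ) = fun l => U l i0 := by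
        intro i0; funext l; simp [hUdef]
      have hx : ρ *ᵥ (fun l => U l i) = 0 := by
        rw [← hcol, hH.mulVec_eigenvectorBasis, ← hddef, hi]
        simp
      have hy : ρ *ᵥ (fun l => U l j) = 0 := by
        rw [← hcol, hH.mulVec_eigenvectorBasis, ← hddef, hj]
        simp
      have h0 := h _ _ hx hy
      rw [← h0, hNdef]
      simp only [mul_apply, dotProduct, mulVec, star_apply, conjTranspose_apply,
        Finset.sum_mul, Finset.mul_sum]
      rw [Finset.sum_comm]
      refine Finset.sum_congr rfl fun l _ => Finset.sum_congr rfl fun k _ => ?_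
      simp only [Pi.star_apply]
      ring
    set c : n → n → ℝ := fun i j => if d i + d j = 0 then 0 else (d i + d j)⁻¹ with hcdef
    set Δ' : Matrix n n ℂ := fun i j => N i j * (c i j : ℝ) with hΔ'def
    have key : Δ' * D + D * Δ'ᴴ = N := by
      ext i j
      have hconj : (starRingEnd ℂ) (N j i) = N i j := by
        conv_rhs => rw [← hNherm]
        simp
      simp only [Matrix.add_apply, hDdef, mul_diagonal, diagonal_mul, conjTranspose_apply,
        Function.comp_apply]
      simp only [hΔ'def]
      have hstar : star (N j i * ((c j i : ℝ) : ℂ)) = N i j * ((c j i : ℝ) : ℂ) := by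
        rw [star_mul']
        rw [show (star (N j i) : ℂ) = (starRingEnd ℂ) (N j i) from rfl, hconj]
        rw [show (star (((c j i : ℝ)) : ℂ) : ℂ) = (starRingEnd ℂ) ((c j i : ℝ) : ℂ) from rfl,
          Complex.conj_ofReal]
      rw [hstar]
      by_cases hs : d i + d j = 0
      · have hnn_i := hρ.eigenvalues_nonneg i
        have hnn_j := hρ.eigenvalues_nonneg j
        have hi : d i = 0 := by simp only [hddef]; linarith
        have hj : d j = 0 := by simp only [hddef]; linarith
        rw [hNzero i j hi hj]
        simp [hi, hj]
      · simp only [hcdef, if_neg hs, show d j + d i = d i + d j from add_comm _ _]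
        have hsC : ((d i + d j : ℝ) : ℂ) ≠ 0 := by exact_mod_cast hs
        have hsC' : ((d j : ℂ) + (d i : ℂ)) ≠ 0 := by
          push_cast at hsC
          rw [add_comm]
          exact hsC
        have hsC'' : ((d i : ℂ) + (d j : ℂ)) ≠ 0 := by
          push_cast at hsC
          exact hsC
        push_cast
        field_simp
        ring_nf
        exact add_comm _ _
    refine ⟨U * Δ' * star U, ?_⟩
    have hΔH : (U * Δ' * star U)ᴴ = U * Δ'ᴴ * star U := by
      simp [conjTranspose_mul, Matrix.mul_assoc, star_eq_conjTranspose,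
        conjTranspose_conjTranspose]
    rw [hΔH]
    calc M = U * N * star U := by
            have h2 : U * N * star U = (U * star U) * M * (U * star U) := by
              rw [hNdef]; noncomm_ring
            rw [h2, hUU', Matrix.one_mul, Matrix.mul_one]
      _ = U * (Δ' * D + D * Δ'ᴴ) * star U := by rw [key]
      _ = (U * Δ' * star U) * ρ + ρ * (U * Δ'ᴴ * star U) := by
            rw [hspec]
            simp only [Matrix.mul_add, Matrix.add_mul, Matrix.mul_assoc]
            rw [← Matrix.mul_assoc (star U) U, hUU, Matrix.one_mul,
              ← Matrix.mul_assoc (star U) U, hUU, Matrix.one_mul]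
  · rintro ⟨Δ, rfl⟩ x y hx hy
    have h1 : (Δ * ρ + ρ * Δᴴ) *ᵥ y = Δ *ᵥ (ρ *ᵥ y) + ρ *ᵥ (Δᴴ *ᵥ y) := by
      simp [add_mulVec, mulVec_mulVec]
    rw [h1, hy, mulVec_zero, zero_add]
    rw [dotProduct_mulVec]
    have : star x ᵥ* ρ = star (ρ *ᵥ x) := by
      rw [star_mulVec, hρ.1.eq]
    rw [this, hx]
    simp
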